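/- Let x ∈ ℝ^{V×D} and φ ∈ ℝ^{V×K×D} satisfy x_{vd} φ_{vkd} > 0 for all v, k, d. Consider the function f(W, H) = −Σ_{v,k,d} x_{vd} φ_{vkd} log(w_{vk} h_{kd}) + Σ_{k,d} h_{kd} on pairs (W, H) where W ∈ ℝ^{V×K} has strictly positive entries with every column in Δ_{V−1} and H ∈ ℝ^{K×D} has strictly positive entries. Define W* by w*_{vk} = (Σ_d x_{vd} φ_{vkd}) / (Σ_{v′,d} x_{v′d} φ_{v′kd}) and H* by h*_{kd} = Σ_v x_{vd} φ_{vkd}. Then every column of W* lies in Δ_{V−1}, H* has strictly positive entries, and f(W*, H*) ≤ f(W, H) for every admissible pair (W, H). -/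

import Mathlib

open Finset

lemma aux_log (b h : ℝ) (hb : 0 < b) (hh : 0 < h) :
    b - b * Real.log b ≤ h - b * Real.log h := by
  have h1 := Real.log_le_sub_one_of_pos (div_pos hh hb)
  rw [Real.log_div hh.ne' hb.ne'] at h1
  have h2 : b * (Real.log h - Real.log b) ≤ b * (h / b - 1) :=
    mul_le_mul_of_nonneg_left h1 hb.le
  have h3 : b * (h / b - 1) = h - b := by field_simp
  nlinarith

lemma gibbs {V : ℕ} (a p : Fin V → ℝ) (ha : ∀ v, 0 < a v) (hp : ∀ v, 0 < p v)
    (hA : 0 < ∑ v, a v) (hsum : ∑ v, p v = 1) :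
    ∑ v, a v * Real.log (p v) ≤ ∑ v, a v * Real.log (a v / ∑ v', a v') := by
  set A := ∑ v, a v with hAdef
  have key : ∀ v, a v * Real.log (p v) - a v * Real.log (a v / A) ≤ p v * A - a v := by
    intro v
    have h1 : Real.log (p v) - Real.log (a v / A) = Real.log (p v * A / a v) := by
      rw [Real.log_div (mul_pos (hp v) hA).ne' (ha v).ne', Real.log_mul (hp v).ne' hA.ne',
        Real.log_div (ha v).ne' hA.ne']
      ring
    have h2 := Real.log_le_sub_one_of_pos (div_pos (mul_pos (hp v) hA) (ha v))
    have h3 : a v * (Real.log (p v) - Real.log (a v / A)) ≤ a v * (p v * A / a v - 1) := by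
      rw [h1]; exact mul_le_mul_of_nonneg_left h2 (ha v).le
    have h4 : a v * (p v * A / a v) = p v * A := by
      rw [mul_comm, div_mul_cancel₀ _ (ha v).ne']
    nlinarith
  have hs := Finset.sum_le_sum (fun v (_ : v ∈ Finset.univ) => key v)
  have h5 : ∑ v, (p v * A - a v) = 0 := by
    rw [Finset.sum_sub_distrib, ← Finset.sum_mul, hsum]; simp [hAdef]
  rw [Finset.sum_sub_distrib, h5] at hs
  linarith



/-- Constrained joint minimization of the auxiliary function
`f(W,H) = -∑_{v,k,d} x_{vd} φ_{vkd} log(w_{vk} h_{kd}) + ∑_{k,d} h_{kd}`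
over pairs `(W,H)` with strictly positive entries and the columns of `W` in the simplex:
the joint multiplicative updates `w*_{vk} ∝ ∑_d x_{vd} φ_{vkd}`,
`h*_{kd} = ∑_v x_{vd} φ_{vkd}` give its exact constrained minimizer. -/
theorem joint_aux_constrained_minimizer {V K D : ℕ} (hV : 0 < V) (hD : 0 < D)
    (x : Fin V → Fin D → ℝ) (φ : Fin V → Fin K → Fin D → ℝ)
    (hpos : ∀ v k d, 0 < x v d * φ v k d) :
    let f : (Fin V → Fin K → ℝ) → (Fin K → Fin D → ℝ) → ℝ := fun W H =>
      -(∑ v, ∑ k, ∑ d, x v d * φ v k d * Real.log (W v k * H k d)) + ∑ k, ∑ d, H k d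
    let Wstar : Fin V → Fin K → ℝ := fun v k =>
      (∑ d, x v d * φ v k d) / (∑ v', ∑ d, x v' d * φ v' k d)
    let Hstar : Fin K → Fin D → ℝ := fun k d => ∑ v, x v d * φ v k d
    -- every column of W* lies in the simplex Δ_{V-1}
    ((∀ v k, 0 ≤ Wstar v k) ∧ (∀ k, (∑ v, Wstar v k) = 1)) ∧
    -- H* has strictly positive entries
    (∀ k d, 0 < Hstar k d) ∧
    -- (W*, H*) minimizes f over the admissible set
    (∀ (W : Fin V → Fin K → ℝ) (H : Fin K → Fin D → ℝ),
      (∀ v k, 0 < W v k) → (∀ k, (∑ v, W v k) = 1) → (∀ k d, 0 < H k d) →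
      f Wstar Hstar ≤ f W H) := by
  intro f Wstar Hstar
  haveI : Nonempty (Fin V) := Fin.pos_iff_nonempty.mp hV
  haveI : Nonempty (Fin D) := Fin.pos_iff_nonempty.mp hD
  have hVne : (Finset.univ : Finset (Fin V)).Nonempty := Finset.univ_nonempty
  have hDne : (Finset.univ : Finset (Fin D)).Nonempty := Finset.univ_nonempty
  have ha : ∀ v k, 0 < ∑ d, x v d * φ v k d := fun v k =>
    Finset.sum_pos (fun d _ => hpos v k d) hDne
  have hA : ∀ k, 0 < ∑ v', ∑ d, x v' d * φ v' k d := fun k =>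
    Finset.sum_pos (fun v _ => ha v k) hVne
  have hb : ∀ k d, 0 < ∑ v, x v d * φ v k d := fun k d =>
    Finset.sum_pos (fun v _ => hpos v k d) hVne
  have hWpos : ∀ v k, 0 < Wstar v k := fun v k => div_pos (ha v k) (hA k)
  have hWsum : ∀ k, (∑ v, Wstar v k) = 1 := by
    intro k
    simp only [Wstar]
    rw [← Finset.sum_div, div_self (hA k).ne']
  -- decomposition of f
  have decomp : ∀ (W : Fin V → Fin K → ℝ) (H : Fin K → Fin D → ℝ),
      (∀ v k, 0 < W v k) → (∀ k d, 0 < H k d) →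
      f W H = -(∑ k, ∑ v, (∑ d, x v d * φ v k d) * Real.log (W v k))
        + ∑ k, ∑ d, (H k d - (∑ v, x v d * φ v k d) * Real.log (H k d)) := by
    intro W H hW hH
    simp only [f]
    have hterm : ∀ v k, ∑ d, x v d * φ v k d * Real.log (W v k * H k d)
        = (∑ d, x v d * φ v k d) * Real.log (W v k)
          + ∑ d, x v d * φ v k d * Real.log (H k d) := by
      intro v k
      rw [Finset.sum_mul, ← Finset.sum_add_distrib]
      refine Finset.sum_congr rfl fun d _ => ?_
      rw [Real.log_mul (hW v k).ne' (hH k d).ne']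
      ring
    have h1 : ∑ v, ∑ k, ∑ d, x v d * φ v k d * Real.log (W v k * H k d)
        = (∑ k, ∑ v, (∑ d, x v d * φ v k d) * Real.log (W v k))
          + ∑ k, ∑ d, (∑ v, x v d * φ v k d) * Real.log (H k d) := by
      calc ∑ v, ∑ k, ∑ d, x v d * φ v k d * Real.log (W v k * H k d)
          = ∑ v, ∑ k, ((∑ d, x v d * φ v k d) * Real.log (W v k)
            + ∑ d, x v d * φ v k d * Real.log (H k d)) := by
            refine Finset.sum_congr rfl fun v _ => Finset.sum_congr rfl fun k _ => hterm v k
        _ = (∑ v, ∑ k, (∑ d, x v d * φ v k d) * Real.log (W v k))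
            + ∑ v, ∑ k, ∑ d, x v d * φ v k d * Real.log (H k d) := by
            rw [← Finset.sum_add_distrib]
            exact Finset.sum_congr rfl fun v _ => Finset.sum_add_distrib
        _ = (∑ k, ∑ v, (∑ d, x v d * φ v k d) * Real.log (W v k))
            + ∑ k, ∑ d, (∑ v, x v d * φ v k d) * Real.log (H k d) := by
            rw [Finset.sum_comm]
            congr 1
            rw [Finset.sum_comm]
            refine Finset.sum_congr rfl fun k _ => ?_
            rw [Finset.sum_comm]
            refine Finset.sum_congr rfl fun d _ => ?_
            rw [Finset.sum_mul]
    have h2 : ∑ k, ∑ d, (H k d - (∑ v, x v d * φ v k d) * Real.log (H k d))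
        = (∑ k, ∑ d, H k d) - ∑ k, ∑ d, (∑ v, x v d * φ v k d) * Real.log (H k d) := by
      simp [Finset.sum_sub_distrib]
    rw [h1, h2]; ring
  refine ⟨⟨fun v k => (hWpos v k).le, hWsum⟩, hb, ?_⟩
  intro W H hW hWs hH
  rw [decomp W H hW hH, decomp Wstar Hstar hWpos hb]
  have hWpart : ∀ k, ∑ v, (∑ d, x v d * φ v k d) * Real.log (W v k)
      ≤ ∑ v, (∑ d, x v d * φ v k d) * Real.log (Wstar v k) := by
    intro k
    exact gibbs (fun v => ∑ d, x v d * φ v k d) (fun v => W v k)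
      (fun v => ha v k) (fun v => hW v k) (hA k) (hWs k)
  have hHpart : ∀ k d, Hstar k d - (∑ v, x v d * φ v k d) * Real.log (Hstar k d)
      ≤ H k d - (∑ v, x v d * φ v k d) * Real.log (H k d) := by
    intro k d
    exact aux_log _ _ (hb k d) (hH k d)
  have h1 : ∑ k, ∑ v, (∑ d, x v d * φ v k d) * Real.log (W v k)
      ≤ ∑ k, ∑ v, (∑ d, x v d * φ v k d) * Real.log (Wstar v k) :=
    Finset.sum_le_sum fun k _ => hWpart k
  have h2 : ∑ k, ∑ d, (Hstar k d - (∑ v, x v d * φ v k d) * Real.log (Hstar k d))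
      ≤ ∑ k, ∑ d, (H k d - (∑ v, x v d * φ v k d) * Real.log (H k d)) :=
    Finset.sum_le_sum fun k _ => Finset.sum_le_sum fun d _ => hHpart k d
  linarith
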